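/- arXiv:2009.13214 — 3 statements merged into one kernel-verified Lean document; each statement's English description precedes it below -/
import Mathlib

section
/- The real function η(α) = α·log₂(1/α) + (1-α)·log₂(1/(1-α)) + β·log₂β - α·log₂α - (β-α)·log₂(β-α) + α·log₂ M, for fixed β > 0 and M > 1, attains its maximum on (0, min(1,β)] at α* = (M(β+1) - √(M²(β-1)² + 4Mβ))/(2(M-1)). -/
open Real Set

set_option maxHeartbeats 1000000

/-- The asymptotic spectral efficiency
`η(α) = α log₂(1/α) + (1-α) log₂(1/(1-α)) + β log₂ β - α log₂ α
        - (β-α) log₂(β-α) + α log₂ M`,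
for fixed `β > 0` and `M > 1`, attains its maximum on `(0, min 1 β]` at
`α* = (M(β+1) - √(M²(β-1)² + 4Mβ))/(2(M-1))`. -/
theorem icm_se_maximizer (β M : ℝ) (hβ : 0 < β) (hM : 1 < M) :
    let η : ℝ → ℝ := fun α =>
      α * logb 2 (1 / α) + (1 - α) * logb 2 (1 / (1 - α))
        + β * logb 2 β - α * logb 2 α - (β - α) * logb 2 (β - α)
        + α * logb 2 M
    let αstar : ℝ :=
      (M * (β + 1) - Real.sqrt (M ^ 2 * (β - 1) ^ 2 + 4 * M * β)) /
        (2 * (M - 1))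
    αstar ∈ Set.Ioc 0 (min 1 β) ∧
      ∀ α ∈ Set.Ioc (0 : ℝ) (min 1 β), η α ≤ η αstar := by
  intro η αstar
  have hM1 : (0:ℝ) < M - 1 := by linarith
  have hM0 : (0:ℝ) < M := by linarith
  obtain ⟨s, hs_def⟩ : ∃ s : ℝ, s = Real.sqrt (M ^ 2 * (β - 1) ^ 2 + 4 * M * β) :=
    ⟨_, rfl⟩
  have hD : (0:ℝ) < M ^ 2 * (β - 1) ^ 2 + 4 * M * β := by positivity
  have hs0 : 0 ≤ s := hs_def ▸ Real.sqrt_nonneg _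
  have hs2 : s ^ 2 = M ^ 2 * (β - 1) ^ 2 + 4 * M * β := by
    rw [hs_def]; exact Real.sq_sqrt hD.le
  obtain ⟨a, ha_def⟩ : ∃ a : ℝ, a = (M * (β + 1) - s) / (2 * (M - 1)) := ⟨_, rfl⟩
  obtain ⟨b, hb_def⟩ : ∃ b : ℝ, b = (M * (β + 1) + s) / (2 * (M - 1)) := ⟨_, rfl⟩
  have hstar : αstar = a := by rw [ha_def, hs_def]
  obtain ⟨m, hm_def⟩ : ∃ m : ℝ, m = min 1 β := ⟨_, rfl⟩
  have hm0 : 0 < m := hm_def ▸ lt_min one_pos hβ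
  have hm1 : m ≤ 1 := hm_def ▸ min_le_left _ _
  have hmβ : m ≤ β := hm_def ▸ min_le_right _ _
  have h2M1 : (2 * (M - 1)) ≠ 0 := by positivity
  -- sum and product of the roots
  have hsum : (M - 1) * (a + b) = M * (β + 1) := by
    rw [ha_def, hb_def]; field_simp; ring
  have hprod : (M - 1) * (a * b) = M * β := by
    rw [ha_def, hb_def]; field_simp
    linear_combination (-1) * hs2
  have hfac : ∀ x : ℝ, (M - 1) * x ^ 2 - M * (β + 1) * x + M * β
      = (M - 1) * (x - a) * (x - b) := by
    intro x
    linear_combination x * hsum - hprod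
  have hab : a ≤ b := by
    rw [ha_def, hb_def]
    apply div_le_div_of_nonneg_right (by linarith) (by positivity)
  have ha_pos : 0 < a := by
    rw [ha_def]
    apply div_pos _ (by positivity)
    nlinarith [mul_pos hM0 hβ, mul_pos (mul_pos hM0 hM1) hβ]
  -- the quadratic is negative at m
  have hgm : (M - 1) * m ^ 2 - M * (β + 1) * m + M * β < 0 := by
    rcases le_total (1:ℝ) β with h | h
    · rw [hm_def, min_eq_left h]; nlinarith
    · rw [hm_def, min_eq_right h]; nlinarith [mul_pos hβ hβ]
  have hP : (m - a) * (m - b) < 0 := by nlinarith [hfac m]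
  have ham : a < m := by nlinarith
  have hmb : m < b := by nlinarith
  -- sign of the quadratic on the two subintervals
  have hgpos : ∀ x : ℝ, 0 < x → x < a → x ^ 2 < M * ((1 - x) * (β - x)) := by
    intro x hx0 hxa
    have h1 : 0 < a - x := by linarith
    have h2 : 0 < b - x := by linarith
    nlinarith [hfac x, mul_pos (mul_pos hM1 h1) h2]
  have hgneg : ∀ x : ℝ, a < x → x < m → M * ((1 - x) * (β - x)) < x ^ 2 := by
    intro x hxa hxm
    have h1 : 0 < x - a := by linarith
    have h2 : 0 < b - x := by linarith
    nlinarith [hfac x, mul_pos (mul_pos hM1 h1) h2]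
  -- rewrite η via natural logs
  have hlog2 : (0:ℝ) < Real.log 2 := Real.log_pos one_lt_two
  obtain ⟨F, hF_def⟩ : ∃ F : ℝ → ℝ, F = fun x =>
      -(2 * (x * Real.log x)) - (1 - x) * Real.log (1 - x)
        - (β - x) * Real.log (β - x) + β * Real.log β + x * Real.log M :=
    ⟨_, rfl⟩
  have hηF : ∀ x : ℝ, η x = F x / Real.log 2 := by
    intro x
    simp only [η, hF_def, Real.logb, one_div, Real.log_inv]
    ring
  -- continuity of F
  have hc1 : Continuous fun x : ℝ => x * Real.log x := Real.continuous_mul_log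
  have hc2 : Continuous fun x : ℝ => (1 - x) * Real.log (1 - x) :=
    hc1.comp (continuous_const.sub continuous_id)
  have hc3 : Continuous fun x : ℝ => (β - x) * Real.log (β - x) :=
    hc1.comp (continuous_const.sub continuous_id)
  have hFc : Continuous F := by
    rw [hF_def]
    exact (((((continuous_const.mul hc1).neg).sub hc2).sub hc3).add
      continuous_const).add (continuous_id.mul continuous_const)
  -- derivative of F on (0, m)
  have hF' : ∀ x ∈ Ioo (0:ℝ) m, HasDerivAt F
      (Real.log M + Real.log (1 - x) + Real.log (β - x) - 2 * Real.log x) x := by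
    intro x hx
    have hx0 : 0 < x := hx.1
    have hx1 : 0 < 1 - x := by have := hx.2; linarith
    have hxβ : 0 < β - x := by have := hx.2; linarith
    have d1 : HasDerivAt (fun y : ℝ => y * Real.log y) (Real.log x + 1) x :=
      Real.hasDerivAt_mul_log hx0.ne'
    have d2 : HasDerivAt (fun y : ℝ => (1 - y) * Real.log (1 - y))
        ((Real.log (1 - x) + 1) * (-1)) x := by
      have := (Real.hasDerivAt_mul_log hx1.ne').comp x
        ((hasDerivAt_id x).const_sub 1)
      simpa [Function.comp_def] using this
    have d3 : HasDerivAt (fun y : ℝ => (β - y) * Real.log (β - y))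
        ((Real.log (β - x) + 1) * (-1)) x := by
      have := (Real.hasDerivAt_mul_log hxβ.ne').comp x
        ((hasDerivAt_id x).const_sub β)
      simpa [Function.comp_def] using this
    have d4 : HasDerivAt (fun y : ℝ => y * Real.log M) (Real.log M) x := by
      simpa using (hasDerivAt_id x).mul_const (Real.log M)
    have dd := ((((d1.const_mul (2:ℝ)).neg.sub d2).sub d3).add_const
      (β * Real.log β)).add d4
    rw [hF_def]
    refine dd.congr_deriv ?_
    ring
  -- sign of the derivative
  have hd_pos : ∀ x ∈ Ioo (0:ℝ) a,
      0 < Real.log M + Real.log (1 - x) + Real.log (β - x) - 2 * Real.log x := by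
    intro x hx
    have hx0 : 0 < x := hx.1
    have hxa : x < a := hx.2
    have hx1 : 0 < 1 - x := by linarith
    have hxβ : 0 < β - x := by linarith
    have key : x ^ 2 < M * ((1 - x) * (β - x)) := hgpos x hx0 hxa
    have e1 : Real.log M + Real.log (1 - x) + Real.log (β - x)
        = Real.log (M * ((1 - x) * (β - x))) := by
      rw [Real.log_mul hM0.ne' (by positivity), Real.log_mul hx1.ne' hxβ.ne']
      ring
    have e2 : 2 * Real.log x = Real.log (x ^ 2) := by
      rw [pow_two, Real.log_mul hx0.ne' hx0.ne']; ring
    rw [e1, e2]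
    have := Real.log_lt_log (by positivity) key
    linarith
  have hd_neg : ∀ x ∈ Ioo a m,
      Real.log M + Real.log (1 - x) + Real.log (β - x) - 2 * Real.log x < 0 := by
    intro x hx
    have hxa : a < x := hx.1
    have hxm : x < m := hx.2
    have hx0 : 0 < x := ha_pos.trans hxa
    have hx1 : 0 < 1 - x := by linarith
    have hxβ : 0 < β - x := by linarith
    have key : M * ((1 - x) * (β - x)) < x ^ 2 := hgneg x hxa hxm
    have e1 : Real.log M + Real.log (1 - x) + Real.log (β - x)
        = Real.log (M * ((1 - x) * (β - x))) := by
      rw [Real.log_mul hM0.ne' (by positivity), Real.log_mul hx1.ne' hxβ.ne']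
      ring
    have e2 : 2 * Real.log x = Real.log (x ^ 2) := by
      rw [pow_two, Real.log_mul hx0.ne' hx0.ne']; ring
    rw [e1, e2]
    have := Real.log_lt_log (by positivity) key
    linarith
  -- monotonicity
  have hmono : StrictMonoOn F (Icc 0 a) := by
    apply strictMonoOn_of_deriv_pos (convex_Icc _ _) hFc.continuousOn
    intro x hx
    rw [interior_Icc] at hx
    have hx' : x ∈ Ioo (0:ℝ) m := ⟨hx.1, hx.2.trans ham⟩
    rw [(hF' x hx').deriv]
    exact hd_pos x hx
  have hanti : StrictAntiOn F (Icc a m) := by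
    apply strictAntiOn_of_deriv_neg (convex_Icc _ _) hFc.continuousOn
    intro x hx
    rw [interior_Icc] at hx
    have hx' : x ∈ Ioo (0:ℝ) m := ⟨ha_pos.trans hx.1, hx.2⟩
    rw [(hF' x hx').deriv]
    exact hd_neg x hx
  -- conclusion
  rw [hstar, ← hm_def]
  refine ⟨⟨ha_pos, ham.le⟩, ?_⟩
  intro α hα
  rw [hηF α, hηF a]
  apply div_le_div_of_nonneg_right ?_ hlog2.le
  rcases le_or_gt α a with h | h
  · exact hmono.monotoneOn ⟨hα.1.le, h⟩ ⟨ha_pos.le, le_refl a⟩ h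
  · exact hanti.antitoneOn ⟨le_refl a, ham.le⟩ ⟨h.le, hα.2⟩ h.le
end

section
/- The root α* = (M(β+1) - √(M²(β-1)² + 4Mβ))/(2(M-1)) of the quadratic (M-1)α² - M(β+1)α + Mβ = 0 satisfies 0 < α* < min(1, β) for all reals M > 1 and β > 0. -/
/-- The root `α* = (M(β+1) - √(M²(β-1)² + 4Mβ))/(2(M-1))` of the quadratic
`(M-1)α² - M(β+1)α + Mβ = 0` satisfies `0 < α* < min 1 β` for all reals
`M > 1`, `β > 0`. -/
theorem icm_root_in_range (β M : ℝ) (hβ : 0 < β) (hM : 1 < M) :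
    let αstar : ℝ :=
      (M * (β + 1) - Real.sqrt (M ^ 2 * (β - 1) ^ 2 + 4 * M * β)) /
        (2 * (M - 1))
    (M - 1) * αstar ^ 2 - M * (β + 1) * αstar + M * β = 0 ∧
      0 < αstar ∧ αstar < min 1 β := by
  intro αstar
  set D : ℝ := M ^ 2 * (β - 1) ^ 2 + 4 * M * β with hD
  have hDnn : 0 ≤ D := by positivity
  set s : ℝ := Real.sqrt D with hs
  have hsnn : 0 ≤ s := Real.sqrt_nonneg _
  have hs2 : s ^ 2 = D := Real.sq_sqrt hDnn
  have hM0 : (0:ℝ) < M := lt_trans one_pos hM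
  have hden : (0:ℝ) < 2 * (M - 1) := by linarith
  have hs2' : s ^ 2 = M ^ 2 * (β - 1) ^ 2 + 4 * M * β := hs2.trans hD
  have hsb : s < M * (β + 1) := by
    by_contra h
    push_neg at h
    nlinarith [pow_le_pow_left₀ (by positivity : (0:ℝ) ≤ M * (β + 1)) h 2, mul_pos (mul_pos hM0 hβ) (by linarith : (0:ℝ) < M - 1)]
  have hαdef : αstar = (M * (β + 1) - s) / (2 * (M - 1)) := rfl
  refine ⟨?_, ?_, ?_⟩
  · rw [hαdef]
    field_simp [(by linarith : M - 1 ≠ 0)]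
    ring_nf
    nlinarith [hs2']
  · rw [hαdef]
    apply div_pos _ hden
    linarith
  · rw [hαdef, lt_min_iff]
    constructor
    · rw [div_lt_one hden]
      by_contra h
      push_neg at h
      nlinarith [pow_le_pow_left₀ hsnn (by linarith : s ≤ M * (β + 1) - 2 * (M - 1)) 2, mul_pos (mul_pos hβ hβ) (by linarith : (0:ℝ) < M - 1)]
    · rw [div_lt_iff₀ hden]
      by_contra h
      push_neg at h
      nlinarith [pow_le_pow_left₀ hsnn (by linarith : s ≤ M * (β + 1) - β * (2 * (M - 1))) 2, mul_pos (mul_pos hβ hβ) (by linarith : (0:ℝ) < M - 1)]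
end

section
/- For fixed β ≥ 1 and M → ∞, the optimal α* = (M(β+1) - √(M²(β-1)² + 4Mβ))/(2(M-1)) converges to min(1, β) = 1; i.e., as the constellation size grows, it is optimal to activate all subcarriers. -/
open Real Filter

/-- For fixed `β ≥ 1`, as `M → ∞` the optimal
`α* = (M(β+1) - √(M²(β-1)² + 4Mβ))/(2(M-1))` converges to `min 1 β = 1`:
as the constellation size grows, it is optimal to activate all subcarriers. -/
theorem icm_opt_alpha_limit (β : ℝ) (hβ : 1 ≤ β) :
    min (1 : ℝ) β = 1 ∧
      Filter.Tendsto
        (fun M : ℝ =>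
          (M * (β + 1) - Real.sqrt (M ^ 2 * (β - 1) ^ 2 + 4 * M * β)) /
            (2 * (M - 1)))
        Filter.atTop (nhds (min 1 β)) := by
  have hmin : min (1 : ℝ) β = 1 := min_eq_left hβ
  refine ⟨hmin, ?_⟩
  rw [hmin]
  have hinv : Tendsto (fun M : ℝ => 1 / M) atTop (nhds 0) := by
    simpa [one_div] using tendsto_inv_atTop_zero
  have hs : Tendsto (fun M : ℝ => Real.sqrt ((β - 1) ^ 2 + 4 * β / M)) atTop
      (nhds (β - 1)) := by
    have h0 : Tendsto (fun M : ℝ => (β - 1) ^ 2 + 4 * β / M) atTop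
        (nhds ((β - 1) ^ 2)) := by
      have : Tendsto (fun M : ℝ => 4 * β / M) atTop (nhds 0) := by
        have := hinv.const_mul (4 * β)
        simpa only [mul_one_div, mul_zero] using this
      simpa using tendsto_const_nhds.add this
    have := (Real.continuous_sqrt.continuousAt (x := (β - 1) ^ 2)).tendsto.comp h0
    simpa [Function.comp_def, Real.sqrt_sq (by linarith : (0:ℝ) ≤ β - 1)] using this
  have hd : Tendsto (fun M : ℝ => 2 * (1 - 1 / M)) atTop (nhds 2) := by
    have := (tendsto_const_nhds (x := (1:ℝ)) (f := atTop)).sub hinv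
    have := this.const_mul 2
    simpa using this
  have hg : Tendsto (fun M : ℝ =>
      ((β + 1) - Real.sqrt ((β - 1) ^ 2 + 4 * β / M)) / (2 * (1 - 1 / M)))
      atTop (nhds 1) := by
    have := (tendsto_const_nhds (x := β + 1) (f := atTop)).sub hs |>.div hd (by norm_num)
    have h2 : ((β + 1) - (β - 1)) / 2 = 1 := by ring
    rwa [h2] at this
  refine hg.congr' ?_
  filter_upwards [eventually_gt_atTop (1:ℝ)] with M hM
  have hM0 : (0:ℝ) < M := by linarith
  have hsq : Real.sqrt (M ^ 2 * (β - 1) ^ 2 + 4 * M * β)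
      = M * Real.sqrt ((β - 1) ^ 2 + 4 * β / M) := by
    have harg : M ^ 2 * (β - 1) ^ 2 + 4 * M * β
        = M ^ 2 * ((β - 1) ^ 2 + 4 * β / M) := by
      field_simp
    rw [harg, Real.sqrt_mul (by positivity), Real.sqrt_sq hM0.le]
  rw [hsq]
  have hM1 : M - 1 ≠ 0 := by linarith
  field_simp
end
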